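/- arXiv:1211.0652 — 2 statements merged into one kernel-verified Lean document; each statement's English description precedes it below -/
import Mathlib

section
/- Let X_1, …, X_n be random variables on a probability space such that the product ∏_{i ∈ T} X_i is integrable for every subset T of {1, …, n}. Then E[∏_{i=1}^n X_i] = ∑_{τ ∈ P({1,…,n})} ∏_{β ∈ τ} κ((X_i)_{i ∈ β}), where the sum ranges over all partitions τ of {1, …, n} into nonempty blocks and κ((X_i)_{i ∈ β}) denotes the joint cumulant of the family of random variables indexed by the block β. -/
open MeasureTheory

/-- The joint cumulant of the family of random variables `(X i)_{i ∈ s}`: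
`κ((X i)_{i ∈ s}) = ∑_{σ ∈ P(s)} (-1)^(|σ|-1) (|σ|-1)! ∏_{γ ∈ σ} E[∏_{i ∈ γ} X i]`,
where the sum is over all partitions `σ` of the finite index set `s`. -/
noncomputable def jointCumulant {Ω : Type*} [MeasureSpace Ω] {ι : Type*} [DecidableEq ι]
    (X : ι → Ω → ℝ) (s : Finset ι) : ℝ :=
  ∑ σ : Finpartition s,
    (-1 : ℝ) ^ (σ.parts.card - 1) * (Nat.factorial (σ.parts.card - 1)) *
      ∏ γ ∈ σ.parts, ∫ ω, ∏ i ∈ γ, X i ω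

open Finset

namespace MCAux

variable {ι : Type*} [DecidableEq ι]

noncomputable def c (k : ℕ) : ℝ := (-1 : ℝ) ^ (k - 1) * (Nat.factorial (k - 1))

lemma avoid_parts_of_mem {s : Finset ι} (ρ : Finpartition s) {b : Finset ι}
    (hb : b ∈ ρ.parts) : (ρ.avoid b).parts = ρ.parts.erase b := by
  ext u
  rw [Finpartition.mem_avoid, mem_erase]
  constructor
  · rintro ⟨d, hd, hdb, rfl⟩
    have hne : d ≠ b := fun h => hdb (h ▸ le_refl _)
    have hdisj : Disjoint d b := ρ.disjoint hd hb hne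
    rw [sdiff_eq_self_of_disjoint hdisj]
    exact ⟨hne, hd⟩
  · rintro ⟨hne, hu⟩
    have hdisj : Disjoint u b := ρ.disjoint hu hb hne
    refine ⟨u, hu, fun hle => ?_, sdiff_eq_self_of_disjoint hdisj⟩
    exact ρ.ne_bot hu (hdisj.eq_bot_of_le hle)

lemma sigma_eq_helper {s : Finset ι} {x : ι} {t t' : Finset ι} (h : t = t')
    {τ : Finpartition ((s \ insert x t : Finset ι))}
    {τ' : Finpartition ((s \ insert x t' : Finset ι))}
    (hp : τ.parts = τ'.parts) :
    (⟨t, τ⟩ : Σ u : Finset ι, Finpartition ((s \ insert x u : Finset ι))) = ⟨t', τ'⟩ := by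
  subst h
  exact congrArg _ (Finpartition.ext hp)

theorem sum_prod_split (f : Finset ι → ℝ) {s : Finset ι} {x : ι} (hx : x ∈ s) :
    (∑ τ : Finpartition s, ∏ β ∈ τ.parts, f β) =
      ∑ t ∈ (s.erase x).powerset, f (insert x t) *
        ∑ τ' : Finpartition ((s \ insert x t : Finset ι)), ∏ β ∈ τ'.parts, f β := by
  have hxt : ∀ t ∈ (s.erase x).powerset, insert x t ⊆ s := fun t ht =>
    insert_subset hx ((mem_powerset.1 ht).trans (erase_subset _ _))
  simp_rw [Finset.mul_sum]
  rw [Finset.sum_sigma' ((s.erase x).powerset) (fun t => (Finset.univ : Finset (Finpartition (s \ insert x t)))) (fun t τ' => f (insert x t) * ∏ β ∈ τ'.parts, f β)]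
  refine Finset.sum_bij'
    (fun τ _ => ⟨(τ.part x).erase x,
      (τ.avoid (τ.part x)).copy (by rw [insert_erase (τ.mem_part hx)])⟩)
    (fun p hp => p.2.extend (b := insert x p.1) (c := s)
      (by simp)
      sdiff_disjoint
      (by rw [sup_eq_union, sdiff_union_of_subset (hxt _ (mem_sigma.1 hp).1)]))
    (fun τ _ => by
      rw [mem_sigma]
      refine ⟨mem_powerset.2 ?_, mem_univ _⟩
      exact (erase_subset_erase x (τ.le (τ.part_mem.2 hx))))
    (fun p hp => mem_univ _)
    (fun τ _ => by
      apply Finpartition.ext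
      show insert (insert x ((τ.part x).erase x)) ((τ.avoid (τ.part x)).parts) = τ.parts
      rw [insert_erase (τ.mem_part hx), avoid_parts_of_mem τ (τ.part_mem.2 hx),
        insert_erase (τ.part_mem.2 hx)])
    (fun p hp => by
      obtain ⟨t, τ'⟩ := p
      have ht := (mem_sigma.1 hp).1
      have hxnt : x ∉ t := fun h => (mem_erase.1 (mem_powerset.1 ht h)).1 rfl
      have hmem : insert x t ∈ (τ'.extend (b := insert x t) (c := s) (by simp) sdiff_disjoint
          (by rw [sup_eq_union, sdiff_union_of_subset (hxt _ ht)])).parts := mem_insert_self _ _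
      have hpart : (τ'.extend (b := insert x t) (c := s) (by simp) sdiff_disjoint
          (by rw [sup_eq_union, sdiff_union_of_subset (hxt _ ht)])).part x = insert x t :=
        Finpartition.part_eq_of_mem _ hmem (mem_insert_self x t)
      refine sigma_eq_helper ?_ ?_
      · rw [hpart, erase_insert hxnt]
      · show ((τ'.extend _ _ _).avoid _).parts = τ'.parts
        rw [avoid_parts_of_mem _ ((Finpartition.part_mem _).2 hx), hpart]
        show (insert (insert x t) τ'.parts).erase (insert x t) = τ'.parts
        refine erase_insert (fun hmem' => ?_)
        have := τ'.le hmem' (mem_insert_self x t)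
        exact (mem_sdiff.1 this).2 (mem_insert_self x t))
    (fun τ _ => by
      simp only [Finpartition.copy_parts]
      rw [insert_erase (τ.mem_part hx), avoid_parts_of_mem τ (τ.part_mem.2 hx),
        Finset.mul_prod_erase _ _ (τ.part_mem.2 hx)])

end MCAux

namespace MCAux2
open MCAux

variable {ι : Type*} [DecidableEq ι]

noncomputable def kappa (M : Finset ι → ℝ) (β : Finset ι) : ℝ :=
  ∑ σ : Finpartition β, c σ.parts.card * ∏ γ ∈ σ.parts, M γ

lemma coeff_eq (m : ℕ) : c m + ((m - 1 : ℕ) : ℝ) * c (m - 1)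
    = if m = 1 then 1 else if m = 0 then 1 else 0 := by
  match m with
  | 0 => simp [c]
  | 1 => simp [c]
  | (k+2) =>
    rw [if_neg (by omega), if_neg (by omega)]
    show c (k+2) + ((k + 1 : ℕ) : ℝ) * c (k+1) = 0
    simp only [c, Nat.add_sub_cancel]
    push_cast [Nat.factorial_succ, pow_succ]
    ring

lemma filter_not_mem_eq_erase_part {s : Finset ι} (ρ : Finpartition s) {x : ι} (hx : x ∈ s) :
    ρ.parts.filter (fun b => x ∉ b) = ρ.parts.erase (ρ.part x) := by
  ext u
  simp only [mem_filter, mem_erase]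
  constructor
  · rintro ⟨hu, hxu⟩
    exact ⟨fun h => hxu (h ▸ ρ.mem_part hx), hu⟩
  · rintro ⟨hne, hu⟩
    exact ⟨hu, fun hxu => hne (ρ.part_eq_of_mem hu hxu).symm⟩

lemma sigma_eq_helper2 {x : ι} {t t' : Finset ι} (h : t = t')
    {τ : Finpartition (insert x t)} {τ' : Finpartition (insert x t')}
    (hp : τ.parts = τ'.parts) :
    (⟨t, τ⟩ : Σ u : Finset ι, Finpartition (insert x u)) = ⟨t', τ'⟩ := by
  subst h
  exact congrArg _ (Finpartition.ext hp)

lemma sigma_eq_opt {s : Finset ι} {ρ ρ' : Finpartition s} {o o' : Option (Finset ι)}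
    (h : ρ = ρ') (h2 : o = o') :
    (⟨ρ, o⟩ : Σ _ : Finpartition s, Option (Finset ι)) = ⟨ρ', o'⟩ := by
  subst h; subst h2; rfl

lemma erase_sdiff_sdiff {s t : Finset ι} {x : ι} (hx : x ∈ s) (ht : t ⊆ s.erase x) :
    s.erase x \ (s \ insert x t) = t := by
  ext i
  simp only [mem_sdiff, mem_erase, mem_insert, not_and, not_not]
  constructor
  · rintro ⟨⟨hix, his⟩, h⟩
    rcases h his with rfl | hit
    · exact absurd rfl hix
    · exact hit
  · intro hit
    have := mem_erase.1 (ht hit)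
    exact ⟨this, fun _ => Or.inr hit⟩

/-- Transport a finpartition to a possibly different index set, defaulting to `⊥`. -/
noncomputable def fc {a b : Finset ι} (P : Finpartition a) : Finpartition b :=
  if h : a = b then P.copy h else ⊥

lemma fc_parts {a b : Finset ι} (P : Finpartition a) (h : a = b) :
    (fc P : Finpartition b).parts = P.parts := by
  rw [fc, dif_pos h, Finpartition.copy_parts]

variable (s : Finset ι) (x : ι)

noncomputable def Ifun : (Σ t : Finset ι, Finpartition (insert x t)) →
    Σ _ : Finpartition s, Option (Finset ι) := fun p =>
  if h : s \ insert x p.1 = ∅ then ⟨fc p.2, none⟩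
  else
    ⟨fc (p.2.extend (b := s \ insert x p.1) (c := insert x p.1 ∪ (s \ insert x p.1))
        (by simpa [bot_eq_empty] using h) disjoint_sdiff_self_right
        (by rw [sup_eq_union])),
      some (s \ insert x p.1)⟩

noncomputable def Jfun : (Σ _ : Finpartition s, Option (Finset ι)) →
    Σ t : Finset ι, Finpartition (insert x t) := fun q =>
  q.2.elim ⟨s.erase x, fc q.1⟩ (fun b => ⟨s.erase x \ b, fc (q.1.avoid b)⟩)

lemma Ifun_pos {t : Finset ι} {σ : Finpartition (insert x t)} (h : s \ insert x t = ∅) :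
    Ifun s x ⟨t, σ⟩ = ⟨fc σ, none⟩ := dif_pos h

lemma Ifun_neg {t : Finset ι} {σ : Finpartition (insert x t)} (h : ¬ s \ insert x t = ∅) :
    Ifun s x ⟨t, σ⟩ =
      ⟨fc (σ.extend (b := s \ insert x t) (c := insert x t ∪ (s \ insert x t))
          (by simpa [bot_eq_empty] using h) disjoint_sdiff_self_right
          (by rw [sup_eq_union])),
        some (s \ insert x t)⟩ := dif_neg h

lemma Jfun_none (ρ : Finpartition s) : Jfun s x ⟨ρ, none⟩ = ⟨s.erase x, fc ρ⟩ := rfl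

lemma Jfun_some (ρ : Finpartition s) (b : Finset ι) :
    Jfun s x ⟨ρ, some b⟩ = ⟨s.erase x \ b, fc (ρ.avoid b)⟩ := rfl

theorem sum_kappa_mul (M : Finset ι → ℝ) (hM : M ∅ = 1) {s : Finset ι} {x : ι} (hx : x ∈ s) :
    ∑ t ∈ (s.erase x).powerset, kappa M (insert x t) * M (s \ insert x t) = M s := by
  classical
  have hxt : ∀ t ∈ (s.erase x).powerset, insert x t ⊆ s := fun t ht =>
    insert_subset hx ((mem_powerset.1 ht).trans (erase_subset _ _))
  have hnotmem : ∀ {t : Finset ι} (σ : Finpartition (insert x t)),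
      s \ insert x t ≠ ∅ → s \ insert x t ∉ σ.parts := by
    intro t σ h hm
    obtain ⟨y, hy⟩ := nonempty_iff_ne_empty.2 h
    exact (mem_sdiff.1 hy).2 (σ.le hm hy)
  simp_rw [kappa, Finset.sum_mul]
  rw [Finset.sum_sigma' ((s.erase x).powerset)
    (fun t => (Finset.univ : Finset (Finpartition (insert x t))))
    (fun t σ => c σ.parts.card * (∏ γ ∈ σ.parts, M γ) * M (s \ insert x t))]
  have step2 :
      (∑ p ∈ ((s.erase x).powerset).sigma
          (fun t => (Finset.univ : Finset (Finpartition (insert x t)))),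
        c p.2.parts.card * (∏ γ ∈ p.2.parts, M γ) * M (s \ insert x p.1))
      = ∑ q ∈ (Finset.univ : Finset (Finpartition s)).sigma
          (fun ρ => insert none ((ρ.parts.filter (fun b => x ∉ b)).image some)),
          (q.2.elim (c q.1.parts.card) (fun _ => c (q.1.parts.card - 1))) *
            ∏ γ ∈ q.1.parts, M γ := by
    refine Finset.sum_bij' (fun p _ => Ifun s x p) (fun q _ => Jfun s x q) ?_ ?_ ?_ ?_ ?_
    · -- hi
      rintro ⟨t, σ⟩ hp
      beta_reduce
      have ht := (mem_sigma.1 hp).1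
      by_cases h : s \ insert x t = ∅
      · rw [Ifun_pos s x h, mem_sigma]
        exact ⟨mem_univ _, mem_insert_self _ _⟩
      · have hcond : insert x t ∪ (s \ insert x t) = s := by
          rw [union_sdiff_of_subset (hxt _ ht)]
        rw [Ifun_neg s x h, mem_sigma]
        refine ⟨mem_univ _, ?_⟩
        simp only [mem_insert, mem_image, mem_filter]
        refine Or.inr ⟨s \ insert x t, ⟨?_, ?_⟩, rfl⟩
        · rw [fc_parts _ hcond, Finpartition.extend_parts]
          exact mem_insert_self _ _
        · intro hxm
          exact (mem_sdiff.1 hxm).2 (mem_insert_self x t)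
    · -- hj
      rintro ⟨ρ, _ | b⟩ hq <;> beta_reduce
      · rw [Jfun_none, mem_sigma]
        exact ⟨mem_powerset_self _, mem_univ _⟩
      · rw [Jfun_some, mem_sigma]
        exact ⟨mem_powerset.2 sdiff_subset, mem_univ _⟩
    · -- left_inv
      rintro ⟨t, σ⟩ hp
      beta_reduce
      have ht := (mem_sigma.1 hp).1
      have hxp : x ∉ t := fun hm => (mem_erase.1 (mem_powerset.1 ht hm)).1 rfl
      by_cases h : s \ insert x t = ∅
      · have hts : insert x t = s :=
          subset_antisymm (hxt _ ht) (sdiff_eq_empty_iff_subset.1 h)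
        rw [Ifun_pos s x h, Jfun_none]
        refine sigma_eq_helper2 (by rw [← hts, erase_insert hxp]) ?_
        rw [fc_parts _ (insert_erase hx).symm, fc_parts _ hts]
      · have hcond : insert x t ∪ (s \ insert x t) = s := by
          rw [union_sdiff_of_subset (hxt _ ht)]
        have hts : s.erase x \ (s \ insert x t) = t := erase_sdiff_sdiff hx (mem_powerset.1 ht)
        have hcond2 : s \ (s \ insert x t) = insert x (s.erase x \ (s \ insert x t)) := by
          rw [hts, sdiff_sdiff_self_left, inter_eq_right.2 (hxt _ ht)]
        rw [Ifun_neg s x h, Jfun_some]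
        refine sigma_eq_helper2 hts ?_
        rw [fc_parts _ hcond2, avoid_parts_of_mem _
            (by rw [fc_parts _ hcond, Finpartition.extend_parts]; exact mem_insert_self _ _),
          fc_parts _ hcond, Finpartition.extend_parts, erase_insert (hnotmem σ h)]
    · -- right_inv
      rintro ⟨ρ, _ | b⟩ hq <;> beta_reduce
      · have hcond : s \ insert x (s.erase x) = ∅ := by
          rw [insert_erase hx, sdiff_self, bot_eq_empty]
        rw [Jfun_none, Ifun_pos s x hcond]
        refine sigma_eq_opt (Finpartition.ext ?_) rfl
        rw [fc_parts _ (by rw [insert_erase hx]), fc_parts _ (insert_erase hx).symm]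
      · have hb : b ∈ ρ.parts ∧ x ∉ b := by
          have h2 := (mem_sigma.1 hq).2
          simp only [mem_insert, mem_image, mem_filter] at h2
          rcases h2 with h2 | ⟨u, ⟨hu, hxu⟩, he⟩
          · exact absurd h2 (by simp)
          · cases Option.some.inj he; exact ⟨hu, hxu⟩
        have e' : s \ b = insert x (s.erase x \ b) := by
          ext i
          simp only [mem_sdiff, mem_insert, mem_erase]
          constructor
          · rintro ⟨his, hib⟩
            by_cases hix : i = x
            · exact Or.inl hix
            · exact Or.inr ⟨⟨hix, his⟩, hib⟩
          · rintro (rfl | ⟨⟨hix, his⟩, hib⟩)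
            · exact ⟨hx, hb.2⟩
            · exact ⟨his, hib⟩
        have h3 : s \ insert x (s.erase x \ b) = b := by
          rw [← e', sdiff_sdiff_self_left, inter_eq_right.2 (ρ.le hb.1)]
        have hcond : ¬ s \ insert x (s.erase x \ b) = ∅ := by
          rw [h3]
          exact (ρ.nonempty_of_mem_parts hb.1).ne_empty
        have hcond3 : insert x (s.erase x \ b) ∪ (s \ insert x (s.erase x \ b)) = s := by
          rw [h3, ← e', sdiff_union_of_subset (ρ.le hb.1)]
        rw [Jfun_some, Ifun_neg s x hcond]
        refine sigma_eq_opt (Finpartition.ext ?_) (congrArg some h3)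
        rw [fc_parts _ hcond3, Finpartition.extend_parts, h3, fc_parts _ e',
          avoid_parts_of_mem _ hb.1, insert_erase hb.1]
    · -- values
      rintro ⟨t, σ⟩ hp
      beta_reduce
      have ht := (mem_sigma.1 hp).1
      by_cases h : s \ insert x t = ∅
      · have hts : insert x t = s :=
          subset_antisymm (hxt _ ht) (sdiff_eq_empty_iff_subset.1 h)
        rw [Ifun_pos s x h, h, hM, mul_one]
        simp only [Option.elim, fc_parts _ hts]
      · have hcond : insert x t ∪ (s \ insert x t) = s := by
          rw [union_sdiff_of_subset (hxt _ ht)]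
        rw [Ifun_neg s x h]
        simp only [Option.elim, fc_parts _ hcond, Finpartition.extend_parts,
          card_insert_of_notMem (hnotmem σ h), Nat.add_sub_cancel,
          prod_insert (hnotmem σ h)]
        ring
  rw [step2]
  rw [Finset.sum_sigma]
  have hnone : ∀ ρ : Finpartition s, (none : Option (Finset ι)) ∉
      (ρ.parts.filter (fun b => x ∉ b)).image some := by simp
  have inner : ∀ ρ : Finpartition s,
      (∑ o ∈ insert none ((ρ.parts.filter (fun b => x ∉ b)).image some),
        (o.elim (c ρ.parts.card) (fun _ => c (ρ.parts.card - 1))) * ∏ γ ∈ ρ.parts, M γ)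
      = (if ρ.parts.card = 1 then 1 else 0) * ∏ γ ∈ ρ.parts, M γ := by
    intro ρ
    rw [Finset.sum_insert (hnone ρ), Finset.sum_image (fun u _ v _ h => Option.some.inj h)]
    have hm1 : 1 ≤ ρ.parts.card := by
      rw [Nat.one_le_iff_ne_zero, Ne, Finset.card_eq_zero, Finpartition.parts_eq_empty_iff]
      intro hbot
      rw [bot_eq_empty] at hbot
      exact notMem_empty x (hbot ▸ hx)
    have hcard : (ρ.parts.filter (fun b => x ∉ b)).card = ρ.parts.card - 1 := by
      rw [filter_not_mem_eq_erase_part ρ hx, card_erase_of_mem (ρ.part_mem.2 hx)]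
    simp only [Option.elim_none, Option.elim_some]
    rw [Finset.sum_const, hcard, nsmul_eq_mul]
    have hco : c ρ.parts.card + ((ρ.parts.card - 1 : ℕ) : ℝ) * c (ρ.parts.card - 1)
        = if ρ.parts.card = 1 then 1 else 0 := by
      rw [coeff_eq]
      split_ifs with h1 h2 <;> first | rfl | omega
    calc (c ρ.parts.card) * ∏ γ ∈ ρ.parts, M γ
          + (((ρ.parts.card - 1 : ℕ) : ℝ)) * ((c (ρ.parts.card - 1)) * ∏ γ ∈ ρ.parts, M γ)
        = (c ρ.parts.card + ((ρ.parts.card - 1 : ℕ) : ℝ) * c (ρ.parts.card - 1))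
            * ∏ γ ∈ ρ.parts, M γ := by ring
      _ = _ := by rw [hco]
  simp_rw [inner]
  have hsne : s ≠ ⊥ := by
    rw [bot_eq_empty]
    exact Finset.nonempty_iff_ne_empty.1 ⟨x, hx⟩
  rw [Finset.sum_eq_single_of_mem (Finpartition.indiscrete hsne) (mem_univ _) ?side]
  case side =>
    intro ρ _ hne
    rw [if_neg, zero_mul]
    intro hc1
    obtain ⟨b, hb⟩ := card_eq_one.1 hc1
    have hbs : b = s := by
      have h2 := ρ.sup_parts
      rw [hb, sup_singleton] at h2
      simpa using h2
    exact hne (Finpartition.ext (by rw [hb, hbs]; rfl))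
  · show (if ({s} : Finset (Finset ι)).card = 1 then (1:ℝ) else 0)
        * ∏ γ ∈ ({s} : Finset (Finset ι)), M γ = M s
    rw [if_pos (card_singleton s), prod_singleton, one_mul]

end MCAux2

namespace MCAux3
open MCAux MCAux2

variable {ι : Type*} [DecidableEq ι]

lemma sum_empty_partition (f : Finset ι → ℝ) :
    (∑ τ : Finpartition (∅ : Finset ι), ∏ β ∈ τ.parts, f β) = 1 := by
  have hparts : ∀ τ : Finpartition (∅ : Finset ι), τ.parts = ∅ := fun τ =>
    Finpartition.parts_eq_empty_iff.2 bot_eq_empty.symm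
  have huniq : ∀ τ : Finpartition (∅ : Finset ι), τ = ⊥ := fun τ =>
    Finpartition.ext (by rw [hparts, hparts])
  calc (∑ τ : Finpartition (∅ : Finset ι), ∏ β ∈ τ.parts, f β)
      = ∑ _τ : Finpartition (∅ : Finset ι), (1 : ℝ) :=
        Finset.sum_congr rfl fun τ _ => by rw [hparts, prod_empty]
    _ = (Fintype.card (Finpartition (∅ : Finset ι)) : ℝ) := by
        rw [Finset.sum_const, nsmul_eq_mul, mul_one]; rfl
    _ = 1 := by
        rw [Fintype.card_eq_one_iff.2 ⟨⊥, fun τ => huniq τ⟩]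
        norm_num

theorem key (M : Finset ι → ℝ) (hM : M ∅ = 1) (s : Finset ι) :
    (∑ τ : Finpartition s, ∏ β ∈ τ.parts, kappa M β) = M s := by
  induction s using Finset.strongInduction with
  | _ s ih =>
    rcases s.eq_empty_or_nonempty with rfl | ⟨x, hx⟩
    · rw [sum_empty_partition, hM]
    · rw [sum_prod_split (kappa M) hx, ← sum_kappa_mul M hM hx]
      refine Finset.sum_congr rfl fun t ht => ?_
      rw [ih (s \ insert x t)
        (sdiff_ssubset (insert_subset hx ((mem_powerset.1 ht).trans (erase_subset _ _)))
          (insert_nonempty x t))]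

end MCAux3

/-- Moments from cumulants: `E[∏ i, X i] = ∑_{τ ∈ P({1,…,n})} ∏_{β ∈ τ} κ((X i)_{i ∈ β})`. -/
theorem integral_prod_eq_sum_prod_jointCumulant {Ω : Type*} [MeasureSpace Ω]
    [IsProbabilityMeasure (volume : Measure Ω)]
    (n : ℕ) (X : Fin n → Ω → ℝ)
    (hint : ∀ T : Finset (Fin n), Integrable (fun ω => ∏ i ∈ T, X i ω)) :
    (∫ ω, ∏ i, X i ω) =
      ∑ τ : Finpartition (Finset.univ : Finset (Fin n)),
        ∏ β ∈ τ.parts, jointCumulant X β := by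
  classical
  have hM : (fun T : Finset (Fin n) => ∫ ω, ∏ i ∈ T, X i ω) ∅ = 1 := by
    simp only [Finset.prod_empty]
    simp
  have h := MCAux3.key (ι := Fin n) (fun T => ∫ ω, ∏ i ∈ T, X i ω) hM Finset.univ
  rw [← h]
  refine Finset.sum_congr rfl fun τ _ => Finset.prod_congr rfl fun β _ => ?_
  rfl
end

section
/- Let X_1, …, X_n be random variables on a probability space such that the product ∏_{i ∈ T} X_i is integrable for every subset T of {1, …, n}. Then for every partition τ of {1, …, n} into nonempty blocks, ∏_{β ∈ τ} E[∏_{i ∈ β} X_i] = ∑_{π ⪯ τ} ∏_{β ∈ π} κ((X_i)_{i ∈ β}), where the sum ranges over all partitions π of {1, …, n} that refine τ (i.e., every block of π is contained in some block of τ). -/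
open MeasureTheory
open scoped Classical

namespace JointCumulantAux

variable {ι : Type*} [DecidableEq ι]

/-- The coefficient `(-1)^(k-1) (k-1)!`. -/
noncomputable def cfun (k : ℕ) : ℝ := (-1 : ℝ) ^ (k - 1) * (Nat.factorial (k - 1))

lemma sup_filter_subset_eq {t : Finset ι} {π ρ : Finpartition t} (h : π ≤ ρ) {β : Finset ι}
    (hβ : β ∈ ρ.parts) : (π.parts.filter (· ⊆ β)).sup id = β := by
  apply le_antisymm
  · exact Finset.sup_le fun p hp => (Finset.mem_filter.1 hp).2
  · intro x hx
    have hxt : x ∈ t := ρ.le hβ hx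
    obtain ⟨β', hβ', hsub⟩ := h (π.part_mem.2 hxt)
    have hxβ' : x ∈ β' := hsub (π.mem_part hxt)
    have hββ : β' = β := ρ.eq_of_mem_parts hβ' hβ hxβ' hx
    exact Finset.mem_sup.2 ⟨π.part x,
      Finset.mem_filter.2 ⟨π.part_mem.2 hxt, hββ ▸ hsub⟩, π.mem_part hxt⟩

/-- Restriction of a refinement `π ≤ ρ` to a part `β` of `ρ`. -/
def restrict {t : Finset ι} (π : Finpartition t) {ρ : Finpartition t} (h : π ≤ ρ)
    {β : Finset ι} (hβ : β ∈ ρ.parts) : Finpartition β :=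
  π.ofSubset (Finset.filter_subset _ _) (sup_filter_subset_eq h hβ)

lemma restrict_parts {t : Finset ι} (π : Finpartition t) {ρ : Finpartition t} (h : π ≤ ρ)
    {β : Finset ι} (hβ : β ∈ ρ.parts) :
    (restrict π h hβ).parts = π.parts.filter (· ⊆ β) := rfl

lemma bind_le {t : Finset ι} (ρ : Finpartition t) (Q : ∀ β ∈ ρ.parts, Finpartition β) :
    ρ.bind Q ≤ ρ := by
  intro p hp
  rw [Finpartition.mem_bind] at hp
  obtain ⟨β, hβ, hpQ⟩ := hp
  exact ⟨β, hβ, (Q β hβ).le hpQ⟩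

lemma bind_filter_eq {t : Finset ι} (ρ : Finpartition t) (Q : ∀ β ∈ ρ.parts, Finpartition β)
    {β : Finset ι} (hβ : β ∈ ρ.parts) :
    (ρ.bind Q).parts.filter (· ⊆ β) = (Q β hβ).parts := by
  ext p
  simp only [Finset.mem_filter, Finpartition.mem_bind]
  constructor
  · rintro ⟨⟨β', hβ', hp⟩, hsub⟩
    obtain ⟨x, hx⟩ := (Q β' hβ').nonempty_of_mem_parts hp
    have hββ : β' = β := ρ.eq_of_mem_parts hβ' hβ ((Q β' hβ').le hp hx) (hsub hx)
    subst hββ; exact hp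
  · intro hp
    exact ⟨⟨β, hβ, hp⟩, (Q β hβ).le hp⟩

lemma prod_bind_parts {M : Type*} [CommMonoid M] {t : Finset ι} (ρ : Finpartition t)
    (Q : ∀ β ∈ ρ.parts, Finpartition β) (g : Finset ι → M) :
    ∏ p ∈ (ρ.bind Q).parts, g p = ∏ β ∈ ρ.parts.attach, ∏ p ∈ (Q β.1 β.2).parts, g p := by
  rw [Finpartition.bind_parts]
  refine Finset.prod_biUnion ?_
  intro β₁ h₁ β₂ h₂ hne
  rw [Function.onFun, Finset.disjoint_left]
  intro p hp₁ hp₂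
  have hne' : β₁.1 ≠ β₂.1 := fun h => hne (Subtype.ext h)
  have hd := ρ.disjoint β₁.2 β₂.2 hne'
  have hb : p ≤ ⊥ := hd ((Q β₁.1 β₁.2).le hp₁) ((Q β₂.1 β₂.2).le hp₂)
  exact (Q β₁.1 β₁.2).ne_bot hp₁ (le_bot_iff.1 hb)

lemma bind_restrict {t : Finset ι} {π ρ : Finpartition t} (h : π ≤ ρ) :
    (ρ.bind fun β hβ => restrict π h hβ) = π := by
  apply Finpartition.ext
  ext p
  rw [Finpartition.mem_bind]
  constructor
  · rintro ⟨β, hβ, hp⟩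
    exact (Finset.mem_filter.1 hp).1
  · intro hp
    obtain ⟨β, hβ, hsub⟩ := h hp
    exact ⟨β, hβ, Finset.mem_filter.2 ⟨hp, hsub⟩⟩

lemma sum_refinements_eq_sum_pi {M : Type*} [AddCommMonoid M] {t : Finset ι} (ρ : Finpartition t)
    (G : Finpartition t → M) :
    ∑ π ∈ Finset.univ.filter (· ≤ ρ), G π
      = ∑ x ∈ ρ.parts.pi (fun _ => Finset.univ), G (ρ.bind (fun β hβ => x β hβ)) := by
  refine Finset.sum_bij' (i := fun π hπ => fun β hβ => restrict π (Finset.mem_filter.1 hπ).2 hβ)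
    (j := fun x _ => ρ.bind (fun β hβ => x β hβ)) (fun π hπ => ?_) (fun x hx => ?_)
    (fun π hπ => ?_) (fun x hx => ?_) (fun π hπ => ?_)
  · exact Finset.mem_pi.2 fun β hβ => Finset.mem_univ _
  · exact Finset.mem_filter.2 ⟨Finset.mem_univ _, bind_le _ _⟩
  · exact bind_restrict _
  · funext β hβ
    apply Finpartition.ext
    rw [restrict_parts, bind_filter_eq]
  · rw [bind_restrict]


lemma avoid_parts_of_mem {t : Finset ι} (ρ : Finpartition t) {B : Finset ι}
    (hB : B ∈ ρ.parts) : (ρ.avoid B).parts = ρ.parts.erase B := by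
  ext p
  rw [Finpartition.mem_avoid, Finset.mem_erase]
  constructor
  · rintro ⟨d, hd, hdB, rfl⟩
    rcases eq_or_ne d B with rfl | hne
    · exact absurd le_rfl hdB
    · have hdisj : Disjoint d B := ρ.disjoint hd hB hne
      rw [hdisj.sdiff_eq_left]
      exact ⟨hne, hd⟩
  · rintro ⟨hne, hp⟩
    have hdisj : Disjoint p B := ρ.disjoint hp hB hne
    refine ⟨p, hp, fun hle => ρ.ne_bot hp (le_bot_iff.1 (hdisj le_rfl hle)), hdisj.sdiff_eq_left⟩

/-- Recursion for sums over all partitions of `t`, according to the block containing `a`. -/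
lemma sum_parts_recursion {t : Finset ι} {a : ι} (ha : a ∈ t) (g : Finset ι → ℝ) :
    ∑ ρ : Finpartition t, ∏ β ∈ ρ.parts, g β
      = ∑ B ∈ t.powerset.filter (a ∈ ·),
          g B * ∑ ρ : Finpartition (t \ B), ∏ β ∈ ρ.parts, g β := by
  rw [← Finset.sum_fiberwise_of_maps_to (g := fun ρ : Finpartition t => ρ.part a)
    (t := t.powerset.filter (a ∈ ·))
    (fun ρ _ => by
      simp only [Finset.mem_filter, Finset.mem_powerset]
      exact ⟨ρ.le (ρ.part_mem.2 ha), ρ.mem_part ha⟩)]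
  refine Finset.sum_congr rfl fun B hB => ?_
  obtain ⟨hBt, haB⟩ := Finset.mem_filter.1 hB
  rw [Finset.mem_powerset] at hBt
  have hBne : B ≠ ⊥ := by
    intro h; rw [h] at haB; exact absurd haB (Finset.notMem_empty a)
  have hdisj : Disjoint (t \ B) B := Finset.sdiff_disjoint
  have hsup : (t \ B) ⊔ B = t := by
    rw [sup_comm]; exact Finset.union_sdiff_of_subset hBt
  rw [Finset.mul_sum]
  refine Finset.sum_bij' (i := fun ρ hρ => ρ.avoid B)
    (j := fun ρ' _ => ρ'.extend hBne hdisj hsup) (fun ρ hρ => Finset.mem_univ _)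
    (fun ρ' _ => ?_) (fun ρ hρ => ?_) (fun ρ' _ => ?_) (fun ρ hρ => ?_)
  · -- extend is in the fiber
    have : a ∈ (B : Finset ι) := haB
    refine Finset.mem_filter.2 ⟨Finset.mem_univ _, ?_⟩
    exact Finpartition.part_eq_of_mem _ (Finset.mem_insert_self _ _) haB
  · -- left inverse : extend (avoid ρ) = ρ
    have hB' : B ∈ ρ.parts := (Finset.mem_filter.1 hρ).2 ▸ ρ.part_mem.2 ha
    apply Finpartition.ext
    rw [Finpartition.extend_parts, avoid_parts_of_mem ρ hB', Finset.insert_erase hB']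
  · -- right inverse : avoid (extend ρ') = ρ'
    apply Finpartition.ext
    have hBmem : B ∈ (ρ'.extend hBne hdisj hsup).parts := Finset.mem_insert_self _ _
    rw [avoid_parts_of_mem _ hBmem, Finpartition.extend_parts, Finset.erase_insert]
    intro hmem
    have := ρ'.le hmem
    have : a ∈ t \ B := this haB
    exact (Finset.mem_sdiff.1 this).2 haB
  · -- values agree
    have hB' : B ∈ ρ.parts := (Finset.mem_filter.1 hρ).2 ▸ ρ.part_mem.2 ha
    rw [avoid_parts_of_mem ρ hB', ← Finset.mul_prod_erase _ _ hB']


lemma cfun_one : cfun 1 = 1 := by simp [cfun]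

lemma cfun_add (k : ℕ) : cfun (k + 2) + ((k : ℝ) + 1) * cfun (k + 1) = 0 := by
  have h2 : k + 2 - 1 = k + 1 := rfl
  have h1 : k + 1 - 1 = k := rfl
  simp only [cfun, h2, h1, Nat.factorial_succ, pow_succ]
  push_cast
  ring

/-- Key identity: `∑_{ρ ⊢ t} ∏_{B ∈ ρ} (-1)^{|B|-1}(|B|-1)! = [|t| ≤ 1]`. -/
lemma sum_cfun (t : Finset ι) :
    ∑ ρ : Finpartition t, ∏ β ∈ ρ.parts, cfun β.card
      = if t.card ≤ 1 then 1 else 0 := by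
  induction t using Finset.strongInduction with
  | _ t ih =>
  rcases t.eq_empty_or_nonempty with rfl | ⟨a, ha⟩
  · have h1 : ∀ ρ : Finpartition (∅ : Finset ι), ρ.parts = ∅ := fun ρ =>
      Finpartition.parts_eq_empty_iff.2 rfl
    rw [if_pos (by simp)]
    rw [Finset.sum_congr rfl (fun ρ _ => by rw [h1 ρ, Finset.prod_empty])]
    rw [Finset.sum_const, Finset.card_univ]
    have hcard : Fintype.card (Finpartition (∅ : Finset ι)) = 1 :=
      Fintype.card_eq_one_iff.2 ⟨⊥, fun y => Finpartition.ext (by rw [h1 y, h1 ⊥])⟩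
    rw [hcard, one_smul]
  · rw [sum_parts_recursion ha]
    have hrec : ∀ B ∈ t.powerset.filter (a ∈ ·),
        cfun B.card * ∑ ρ : Finpartition (t \ B), ∏ β ∈ ρ.parts, cfun β.card
          = if (t \ B).card ≤ 1 then cfun B.card else 0 := by
      intro B hB
      obtain ⟨hBt, haB⟩ := Finset.mem_filter.1 hB
      rw [Finset.mem_powerset] at hBt
      have hss : t \ B ⊂ t := by
        refine Finset.ssubset_iff_of_subset (Finset.sdiff_subset) |>.2 ⟨a, ha, ?_⟩
        simp [haB]
      rw [ih _ hss]
      split_ifs <;> simp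
    rw [Finset.sum_congr rfl hrec, ← Finset.sum_filter, Finset.filter_filter]
    have hk1 : 1 ≤ t.card := Finset.card_pos.2 ⟨a, ha⟩
    rcases eq_or_lt_of_le hk1 with h1 | h2
    · -- |t| = 1
      obtain ⟨b, rfl⟩ := Finset.card_eq_one.1 h1.symm
      have hab : b = a := (Finset.mem_singleton.1 ha).symm
      subst hab
      rw [if_pos (by simp)]
      have hfil : ({b} : Finset ι).powerset.filter (fun B => b ∈ B ∧ (({b} : Finset ι) \ B).card ≤ 1)
          = {{b}} := by
        ext B
        simp only [Finset.mem_filter, Finset.mem_powerset, Finset.subset_singleton_iff,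
          Finset.mem_singleton]
        constructor
        · rintro ⟨rfl | rfl, hb, _⟩
          · exact absurd hb (Finset.notMem_empty b)
          · rfl
        · rintro rfl
          exact ⟨Or.inr rfl, Finset.mem_singleton_self b, by simp⟩
      rw [hfil, Finset.sum_singleton, Finset.card_singleton, cfun_one]
    · -- |t| ≥ 2
      rw [if_neg (by omega)]
      have hset : t.powerset.filter (fun B => a ∈ B ∧ (t \ B).card ≤ 1)
          = insert t ((t.erase a).image (fun x => t.erase x)) := by
        ext B
        simp only [Finset.mem_filter, Finset.mem_powerset, Finset.mem_insert, Finset.mem_image,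
          Finset.mem_erase]
        constructor
        · rintro ⟨hBt, haB, hcard⟩
          rcases Nat.le_one_iff_eq_zero_or_eq_one.1 hcard with h0 | h1'
          · left
            exact (Finset.Subset.antisymm hBt
              (Finset.sdiff_eq_empty_iff_subset.1 (Finset.card_eq_zero.1 h0))).symm ▸ rfl
          · obtain ⟨x, hx⟩ := Finset.card_eq_one.1 h1'
            have hxm : x ∈ t \ B := hx ▸ Finset.mem_singleton_self x
            obtain ⟨hxt, hxB⟩ := Finset.mem_sdiff.1 hxm
            right
            refine ⟨x, ⟨fun h => hxB (h ▸ haB), hxt⟩, ?_⟩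
            ext y
            rw [Finset.mem_erase]
            constructor
            · rintro ⟨hyx, hyt⟩
              by_contra hyB
              have : y ∈ t \ B := Finset.mem_sdiff.2 ⟨hyt, hyB⟩
              rw [hx, Finset.mem_singleton] at this
              exact hyx this
            · intro hyB
              exact ⟨fun h => hxB (h ▸ hyB), hBt hyB⟩
        · rintro (rfl | ⟨x, ⟨hxa, hxt⟩, rfl⟩)
          · exact ⟨subset_rfl, ha, by simp⟩
          · refine ⟨Finset.erase_subset _ _, Finset.mem_erase.2 ⟨fun h => hxa h.symm, ha⟩, ?_⟩
            have : t \ t.erase x = {x} := by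
              ext y
              simp only [Finset.mem_sdiff, Finset.mem_erase, Finset.mem_singleton, not_and]
              constructor
              · rintro ⟨hyt, h⟩
                by_contra hne
                exact (h hne) hyt
              · rintro rfl
                exact ⟨hxt, fun h => absurd rfl h⟩
            rw [this, Finset.card_singleton]
      rw [hset, Finset.sum_insert, Finset.sum_image]
      · have hcc : ∀ x ∈ t.erase a, cfun ((t.erase x).card) = cfun (t.card - 1) := by
          intro x hx
          rw [Finset.card_erase_of_mem (Finset.mem_of_mem_erase hx)]
        rw [Finset.sum_congr rfl hcc, Finset.sum_const, Finset.card_erase_of_mem ha,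
          nsmul_eq_mul]
        obtain ⟨m, hm⟩ : ∃ m, t.card = m + 2 := ⟨t.card - 2, by omega⟩
        rw [hm]
        have : (m + 2 - 1) = m + 1 := rfl
        rw [this]
        push_cast
        exact cfun_add m
      · -- injectivity of erase on t.erase a
        intro x hx y hy hxy
        by_contra hne
        have hxt : x ∈ t := Finset.mem_of_mem_erase hx
        have : x ∈ t.erase y := Finset.mem_erase.2 ⟨hne, hxt⟩
        rw [← show t.erase x = t.erase y from hxy] at this
        exact (Finset.mem_erase.1 this).1 rfl
      · -- t not in the image
        intro hmem
        obtain ⟨x, hx, hex⟩ := Finset.mem_image.1 hmem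
        have hxt : x ∈ t := Finset.mem_of_mem_erase hx
        have : x ∉ t.erase x := Finset.notMem_erase x t
        rw [hex] at this
        exact this hxt


section Coarsen
variable {t : Finset ι} (π : Finpartition t)

lemma filter_sup_eq {κ : Finpartition π.parts} {b : Finset (Finset ι)} (hb : b ∈ κ.parts) :
    π.parts.filter (· ⊆ b.sup id) = b := by
  have hbsub : b ⊆ π.parts := κ.le hb
  ext p
  rw [Finset.mem_filter]
  constructor
  · rintro ⟨hp, hps⟩
    obtain ⟨x, hx⟩ := π.nonempty_of_mem_parts hp
    obtain ⟨q, hq, hxq⟩ := Finset.mem_sup.1 (hps hx)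
    rwa [π.eq_of_mem_parts hp (hbsub hq) hx hxq]
  · intro hp
    exact ⟨hbsub hp, Finset.le_sup (f := id) hp⟩

/-- Coarsening of `π` along a partition `κ` of its set of parts. -/
def coarsen (κ : Finpartition π.parts) : Finpartition t where
  parts := κ.parts.image (fun b => b.sup id)
  supIndep := by
    rw [Finset.supIndep_iff_pairwiseDisjoint]
    intro x hx y hy hxy
    obtain ⟨b₁, hb₁, rfl⟩ := Finset.mem_image.1 (Finset.mem_coe.1 hx)
    obtain ⟨b₂, hb₂, rfl⟩ := Finset.mem_image.1 (Finset.mem_coe.1 hy)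
    have hbne : b₁ ≠ b₂ := fun h => hxy (h ▸ rfl)
    have hd : Disjoint b₁ b₂ := κ.disjoint hb₁ hb₂ hbne
    rw [Function.onFun, Finset.disjoint_left]
    intro e he₁ he₂
    obtain ⟨q₁, hq₁, he₁'⟩ := Finset.mem_sup.1 he₁
    obtain ⟨q₂, hq₂, he₂'⟩ := Finset.mem_sup.1 he₂
    have : q₁ = q₂ := π.eq_of_mem_parts (κ.le hb₁ hq₁) (κ.le hb₂ hq₂) he₁' he₂'
    subst this
    exact (Finset.disjoint_left.1 hd) hq₁ hq₂
  sup_parts := by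
    apply le_antisymm
    · refine Finset.sup_le fun x hx => ?_
      obtain ⟨b, hb, rfl⟩ := Finset.mem_image.1 hx
      exact Finset.sup_le fun p hp => π.le (κ.le hb hp)
    · intro x hx
      obtain ⟨b, hb, hpb⟩ := κ.exists_mem (π.part_mem.2 hx)
      refine Finset.mem_sup.2 ⟨b.sup id, Finset.mem_image_of_mem _ hb, ?_⟩
      exact Finset.mem_sup.2 ⟨π.part x, hpb, π.mem_part hx⟩
  bot_notMem := by
    intro h
    obtain ⟨b, hb, hsup⟩ := Finset.mem_image.1 h
    obtain ⟨p, hp⟩ := κ.nonempty_of_mem_parts hb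
    have : p ≤ ⊥ := hsup ▸ Finset.le_sup (f := id) hp
    exact π.ne_bot (κ.le hb hp) (le_bot_iff.1 this)

lemma le_coarsen (κ : Finpartition π.parts) : π ≤ coarsen π κ := by
  intro p hp
  obtain ⟨b, hb, hpb⟩ := κ.exists_mem hp
  exact ⟨b.sup id, Finset.mem_image_of_mem _ hb, Finset.le_sup (f := id) hpb⟩

lemma coarsen_parts (κ : Finpartition π.parts) :
    (coarsen π κ).parts = κ.parts.image (fun b => b.sup id) := rfl

/-- The partition of `π.parts` induced by a coarsening `ρ` of `π`. -/
def fiber {ρ : Finpartition t} (h : π ≤ ρ) : Finpartition π.parts where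
  parts := ρ.parts.image (fun β => π.parts.filter (· ⊆ β))
  supIndep := by
    rw [Finset.supIndep_iff_pairwiseDisjoint]
    intro x hx y hy hxy
    obtain ⟨β₁, hβ₁, rfl⟩ := Finset.mem_image.1 (Finset.mem_coe.1 hx)
    obtain ⟨β₂, hβ₂, rfl⟩ := Finset.mem_image.1 (Finset.mem_coe.1 hy)
    have hbne : β₁ ≠ β₂ := fun hh => hxy (hh ▸ rfl)
    rw [Function.onFun, Finset.disjoint_left]
    intro p hp₁ hp₂
    obtain ⟨hp, hs₁⟩ := Finset.mem_filter.1 hp₁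
    obtain ⟨_, hs₂⟩ := Finset.mem_filter.1 hp₂
    have : p ≤ ⊥ := (ρ.disjoint hβ₁ hβ₂ hbne) hs₁ hs₂
    exact π.ne_bot hp (le_bot_iff.1 this)
  sup_parts := by
    apply le_antisymm
    · refine Finset.sup_le fun x hx => ?_
      obtain ⟨β, hβ, rfl⟩ := Finset.mem_image.1 hx
      exact Finset.filter_subset _ _
    · intro p hp
      obtain ⟨β, hβ, hpβ⟩ := h hp
      exact Finset.mem_sup.2 ⟨π.parts.filter (· ⊆ β), Finset.mem_image_of_mem _ hβ,
        Finset.mem_filter.2 ⟨hp, hpβ⟩⟩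
  bot_notMem := by
    intro hmem
    obtain ⟨β, hβ, hfil⟩ := Finset.mem_image.1 hmem
    obtain ⟨x, hx⟩ := ρ.nonempty_of_mem_parts hβ
    have hxt : x ∈ t := ρ.le hβ hx
    obtain ⟨β', hβ', hsub⟩ := h (π.part_mem.2 hxt)
    have : β' = β := ρ.eq_of_mem_parts hβ' hβ (hsub (π.mem_part hxt)) hx
    have hmem' : π.part x ∈ π.parts.filter (· ⊆ β) :=
      Finset.mem_filter.2 ⟨π.part_mem.2 hxt, this ▸ hsub⟩
    rw [hfil] at hmem'
    exact Finset.notMem_empty _ hmem'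

lemma fiber_parts {ρ : Finpartition t} (h : π ≤ ρ) :
    (fiber π h).parts = ρ.parts.image (fun β => π.parts.filter (· ⊆ β)) := rfl

lemma coarsen_fiber {ρ : Finpartition t} (h : π ≤ ρ) : coarsen π (fiber π h) = ρ := by
  apply Finpartition.ext
  rw [coarsen_parts, fiber_parts, Finset.image_image]
  conv_rhs => rw [← Finset.image_id (s := ρ.parts)]
  refine Finset.image_congr fun β hβ => ?_
  exact sup_filter_subset_eq h hβ

lemma fiber_coarsen (κ : Finpartition π.parts) : fiber π (le_coarsen π κ) = κ := by
  apply Finpartition.ext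
  rw [fiber_parts, coarsen_parts, Finset.image_image]
  conv_rhs => rw [← Finset.image_id (s := κ.parts)]
  refine Finset.image_congr fun b hb => ?_
  exact filter_sup_eq π hb

lemma filter_injOn {ρ : Finpartition t} (h : π ≤ ρ) :
    ∀ β₁ ∈ ρ.parts, ∀ β₂ ∈ ρ.parts,
      π.parts.filter (· ⊆ β₁) = π.parts.filter (· ⊆ β₂) → β₁ = β₂ := by
  intro β₁ h₁ β₂ h₂ heq
  rw [← sup_filter_subset_eq h h₁, ← sup_filter_subset_eq h h₂, heq]

/-- Lemma D : summing the coefficient weights over all coarsenings of `π`. -/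
lemma sum_coarsenings (t : Finset ι) (π : Finpartition t) :
    ∑ ρ ∈ Finset.univ.filter (fun ρ => π ≤ ρ),
        ∏ β ∈ ρ.parts, cfun ((π.parts.filter (· ⊆ β)).card)
      = if π.parts.card ≤ 1 then 1 else 0 := by
  rw [← sum_cfun π.parts]
  refine Finset.sum_bij' (i := fun ρ hρ => fiber π (Finset.mem_filter.1 hρ).2)
    (j := fun κ _ => coarsen π κ) (fun ρ hρ => Finset.mem_univ _)
    (fun κ _ => Finset.mem_filter.2 ⟨Finset.mem_univ _, le_coarsen π κ⟩)
    (fun ρ hρ => coarsen_fiber π _) (fun κ _ => fiber_coarsen π κ) (fun ρ hρ => ?_)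
  rw [fiber_parts, Finset.prod_image]
  · exact fun β₁ h₁ β₂ h₂ => filter_injOn π (Finset.mem_filter.1 hρ).2 β₁ h₁ β₂ h₂
  done

end Coarsen

/-- Lemma C : the moment of a nonempty block is the sum over its partitions of the
products of the cumulant-like expressions. -/
lemma sum_partitions_prod_cumulant (t : Finset ι) (ht : t.Nonempty) (m : Finset ι → ℝ) :
    ∑ ρ : Finpartition t, ∏ β ∈ ρ.parts,
        (∑ σ : Finpartition β, cfun σ.parts.card * ∏ γ ∈ σ.parts, m γ) = m t := by
  have htb : t ≠ ⊥ := by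
    rw [Finset.bot_eq_empty]
    exact ht.ne_empty
  -- F π ρ : the weight of the pair π ≤ ρ
  set F : Finpartition t → Finpartition t → ℝ := fun π ρ =>
    (∏ β ∈ ρ.parts, cfun ((π.parts.filter (· ⊆ β)).card)) * ∏ p ∈ π.parts, m p with hF
  have step1 : ∀ ρ : Finpartition t,
      ∏ β ∈ ρ.parts, (∑ σ : Finpartition β, cfun σ.parts.card * ∏ γ ∈ σ.parts, m γ)
        = ∑ π ∈ Finset.univ.filter (· ≤ ρ), F π ρ := by
    intro ρ
    rw [Finset.prod_sum, sum_refinements_eq_sum_pi ρ (fun π => F π ρ)]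
    refine Finset.sum_congr rfl fun x hx => ?_
    rw [Finset.prod_mul_distrib, hF]
    congr 1
    · rw [← Finset.prod_attach ρ.parts
        (fun β => cfun ((((ρ.bind fun β hβ => x β hβ)).parts.filter (· ⊆ β)).card))]
      refine Finset.prod_congr rfl fun β _ => ?_
      rw [bind_filter_eq ρ _ β.2]
    · rw [prod_bind_parts]
  rw [Finset.sum_congr rfl fun ρ _ => step1 ρ]
  rw [Finset.sum_comm' (t' := Finset.univ)
    (s' := fun π => Finset.univ.filter (fun ρ => π ≤ ρ)) (fun π ρ => by
      simp only [Finset.mem_univ, Finset.mem_filter, true_and]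
      tauto)]
  have step2 : ∀ π : Finpartition t,
      ∑ ρ ∈ Finset.univ.filter (fun ρ => π ≤ ρ), F π ρ
        = (∏ p ∈ π.parts, m p) * (if π.parts.card ≤ 1 then 1 else 0) := by
    intro π
    rw [← sum_coarsenings t π, Finset.mul_sum]
    refine Finset.sum_congr rfl fun ρ hρ => ?_
    rw [hF, mul_comm]
  rw [Finset.sum_congr rfl fun π _ => step2 π]
  -- only the indiscrete partition survives
  rw [Finset.sum_eq_single (Finpartition.indiscrete htb)]
  · simp [Finpartition.indiscrete]
  · intro π _ hne
    rw [if_neg, mul_zero]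
    intro hcard
    have h1 : π.parts.card = 1 := by
      have : π.parts.Nonempty := π.parts_nonempty htb
      have := Finset.card_pos.2 this
      omega
    obtain ⟨b, hb⟩ := Finset.card_eq_one.1 h1
    have hbt : b = t := by
      have := π.sup_parts
      rw [hb] at this
      simpa using this
    exact hne (Finpartition.ext (by rw [hb, hbt]; rfl))
  · intro h
    exact absurd (Finset.mem_univ _) h


end JointCumulantAux

/-- For every partition `τ` of `{1, …, n}`,
`∏_{β ∈ τ} E[∏_{i ∈ β} X i] = ∑_{π ⪯ τ} ∏_{β ∈ π} κ((X i)_{i ∈ β})`, where the sum is over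
all partitions `π` refining `τ` (every block of `π` is contained in some block of `τ`). -/
theorem prod_integral_eq_sum_refinements_prod_jointCumulant {Ω : Type*} [MeasureSpace Ω]
    [IsProbabilityMeasure (volume : Measure Ω)]
    (n : ℕ) (X : Fin n → Ω → ℝ)
    (hint : ∀ T : Finset (Fin n), Integrable (fun ω => ∏ i ∈ T, X i ω))
    (τ : Finpartition (Finset.univ : Finset (Fin n))) :
    (∏ β ∈ τ.parts, ∫ ω, ∏ i ∈ β, X i ω) =
      ∑ π ∈ Finset.univ.filter (fun π : Finpartition (Finset.univ : Finset (Fin n)) => π ≤ τ),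
        ∏ β ∈ π.parts, jointCumulant X β := by
  classical
  have hK : ∀ β : Finset (Fin n), jointCumulant X β
      = ∑ σ : Finpartition β, JointCumulantAux.cfun σ.parts.card
          * ∏ γ ∈ σ.parts, ∫ ω, ∏ i ∈ γ, X i ω := fun β => rfl
  symm
  rw [JointCumulantAux.sum_refinements_eq_sum_pi τ
    (fun π => ∏ β ∈ π.parts, jointCumulant X β)]
  rw [Finset.sum_congr rfl
    (fun x _ => JointCumulantAux.prod_bind_parts τ _ (jointCumulant X))]
  rw [← Finset.prod_sum τ.parts (fun γ => (Finset.univ : Finset (Finpartition γ)))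
    (fun γ ρ => ∏ p ∈ ρ.parts, jointCumulant X p)]
  refine Finset.prod_congr rfl fun γ hγ => ?_
  have hγne : γ.Nonempty := τ.nonempty_of_mem_parts hγ
  rw [Finset.sum_congr rfl (fun ρ _ => Finset.prod_congr rfl fun β _ => hK β)]
  exact JointCumulantAux.sum_partitions_prod_cumulant γ hγne _
end
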